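/- The permutation g = (2,3)(4,5,6) in S_6 lies in a transitive solvable subgroup of S_6 that does not stabilize the orbits of g; hence the conclusion of Lemma 2.1 (that any nilpotent subgroup containing an element with distinct orbit sizes stabilizes each orbit) fails if 'nilpotent' is weakened to 'solvable'. -/

import Mathlib

open Equiv

/-- Block function: true on `{0,1,2}`, false on `{3,4,5}`. -/
def B6 : Fin 6 → Bool := fun x => decide (x.val < 3)

/-- The imprimitive subgroup of permutations preserving the block partition
    `{0,1,2} / {3,4,5}` (isomorphic to `S₃ ≀ S₂`). -/
def Hblk : Subgroup (Equiv.Perm (Fin 6)) where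
  carrier := {π | ∀ x y : Fin 6, B6 (π x) = B6 (π y) ↔ B6 x = B6 y}
  mul_mem' := by
    intro a b ha hb x y
    exact (ha (b x) (b y)).trans (hb x y)
  one_mem' := by intro x y; exact Iff.rfl
  inv_mem' := by
    intro a ha x y
    have h := ha (a⁻¹ x) (a⁻¹ y)
    simpa [Equiv.Perm.inv_def] using h.symm

/-- The pointwise block stabilizer (isomorphic to `S₃ × S₃`). -/
def Kblk : Subgroup (Equiv.Perm (Fin 6)) where
  carrier := {π | ∀ x : Fin 6, B6 (π x) = B6 x}
  mul_mem' := by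
    intro a b ha hb x
    exact (ha (b x)).trans (hb x)
  one_mem' := by intro x; rfl
  inv_mem' := by
    intro a ha x
    have h := ha (a⁻¹ x)
    simpa [Equiv.Perm.inv_def] using h.symm

lemma Kblk_le_Hblk : Kblk ≤ Hblk := by
  intro π hπ x y
  rw [hπ x, hπ y]

/-- Transport of permutation groups along an equivalence. -/
def permTransfer {α β : Type*} (e : α ≃ β) : Equiv.Perm α →* Equiv.Perm β :=
  MonoidHom.mk' (fun p => (e.symm.trans p).trans e) (by
    intro a b
    ext x
    simp [Equiv.Perm.mul_apply])

lemma permTransfer_injective {α β : Type*} (e : α ≃ β) :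
    Function.Injective (permTransfer e) := by
  intro a b h
  ext x
  have := congrArg (fun p => p.toFun (e x)) h
  simpa using e.injective (by simpa [permTransfer] using this)

lemma isSolvable_perm_bool : Group.IsSolvable (Equiv.Perm Bool) := by
  haveI : Fact (Nat.Prime 2) := ⟨Nat.prime_two⟩
  haveI : IsCyclic (Equiv.Perm Bool) :=
    isCyclic_of_prime_card (p := 2) (by rw [Nat.card_eq_fintype_card]; decide)
  letI : CommGroup (Equiv.Perm Bool) := IsCyclic.commGroup
  infer_instance

lemma isSolvable_perm_fin3 : Group.IsSolvable (Equiv.Perm (Fin 3)) := by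
  have hcard : Nat.card (alternatingGroup (Fin 3)) = 3 := by
    rw [Nat.card_eq_fintype_card]; decide
  haveI : Fact (Nat.Prime 3) := ⟨by norm_num⟩
  haveI : IsCyclic (alternatingGroup (Fin 3)) := isCyclic_of_prime_card hcard
  letI : CommGroup (alternatingGroup (Fin 3)) := IsCyclic.commGroup
  exact solvable_of_ker_le_range (alternatingGroup (Fin 3)).subtype Equiv.Perm.sign
    (by rw [Subgroup.range_subtype, ← alternatingGroup_eq_sign_ker])

lemma isSolvable_perm_of_card3 {α : Type*} [DecidableEq α] [Fintype α]
    (h : Fintype.card α = 3) : Group.IsSolvable (Equiv.Perm α) := by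
  haveI := isSolvable_perm_fin3
  exact solvable_of_solvable_injective
    (permTransfer_injective (Fintype.equivFinOfCardEq h))

/-- Restriction of a block-pointwise-stabilizing permutation to the two blocks. -/
def Psi : Kblk →* Equiv.Perm {x : Fin 6 // B6 x = true} × Equiv.Perm {x : Fin 6 // B6 x = false} :=
  MonoidHom.mk' (fun π =>
    ((π : Equiv.Perm (Fin 6)).subtypePerm (fun x => by rw [π.2 x]),
     (π : Equiv.Perm (Fin 6)).subtypePerm (fun x => by rw [π.2 x])))
    (by
      intro a b
      refine Prod.ext ?_ ?_ <;> · ext x; rfl)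

lemma Kblk_solvable : Group.IsSolvable Kblk := by
  have hΨ : Function.Injective Psi := by
    intro a b hab
    apply Subtype.ext
    apply Equiv.ext
    intro x
    by_cases hx : B6 x = true
    · have := congrArg (fun p => ((p.1 ⟨x, hx⟩ : {x : Fin 6 // B6 x = true}) : Fin 6)) hab
      simpa [Psi, Equiv.Perm.subtypePerm_apply] using this
    · have hx' : B6 x = false := by simpa using hx
      have := congrArg (fun p => ((p.2 ⟨x, hx'⟩ : {x : Fin 6 // B6 x = false}) : Fin 6)) hab
      simpa [Psi, Equiv.Perm.subtypePerm_apply] using this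
  haveI : Group.IsSolvable (Equiv.Perm {x : Fin 6 // B6 x = true}) :=
    isSolvable_perm_of_card3 (by decide)
  haveI : Group.IsSolvable (Equiv.Perm {x : Fin 6 // B6 x = false}) :=
    isSolvable_perm_of_card3 (by decide)
  exact solvable_of_solvable_injective hΨ

/-- The induced permutation of the block set. -/
def Ffun (π : Hblk) : Equiv.Perm Bool :=
  if B6 ((π : Equiv.Perm (Fin 6)) 0) = true then 1 else Equiv.swap false true

lemma Ffun_spec (π : Hblk) (x : Fin 6) :
    B6 ((π : Equiv.Perm (Fin 6)) x) = Ffun π (B6 x) := by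
  have h03 : B6 ((π : Equiv.Perm (Fin 6)) 3) ≠ B6 ((π : Equiv.Perm (Fin 6)) 0) := by
    intro h
    exact absurd ((π.2 3 0).mp h) (by decide)
  by_cases hx : B6 x = true
  · have hx0 : B6 x = B6 (0 : Fin 6) := by rw [hx]; rfl
    have h := (π.2 x 0).mpr hx0
    by_cases h0 : B6 ((π : Equiv.Perm (Fin 6)) 0) = true
    · simp [Ffun, h0, hx, h]
    · have h0' : B6 ((π : Equiv.Perm (Fin 6)) 0) = false := by simpa using h0
      simp [Ffun, h0', hx, h]
  · have hx' : B6 x = false := by simpa using hx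
    have hx3 : B6 x = B6 (3 : Fin 6) := by rw [hx']; rfl
    have h := (π.2 x 3).mpr hx3
    by_cases h0 : B6 ((π : Equiv.Perm (Fin 6)) 0) = true
    · have h3 : B6 ((π : Equiv.Perm (Fin 6)) 3) = false := by
        cases hb : B6 ((π : Equiv.Perm (Fin 6)) 3)
        · rfl
        · exact absurd (hb.trans h0.symm) h03
      simp [Ffun, h0, hx', h, h3]
    · have h0' : B6 ((π : Equiv.Perm (Fin 6)) 0) = false := by simpa using h0
      have h3 : B6 ((π : Equiv.Perm (Fin 6)) 3) = true := by
        cases hb : B6 ((π : Equiv.Perm (Fin 6)) 3)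
        · exact absurd (hb.trans h0'.symm) h03
        · rfl
      simp [Ffun, h0', hx', h, h3]

/-- The block action homomorphism `Hblk →* S₂`. -/
def Fhom : Hblk →* Equiv.Perm Bool :=
  MonoidHom.mk' Ffun (by
    intro a b
    ext c
    obtain ⟨x, hx⟩ : ∃ x : Fin 6, B6 x = c := by
      cases c
      · exact ⟨3, rfl⟩
      · exact ⟨0, rfl⟩
    have key : B6 (((a * b : Hblk) : Equiv.Perm (Fin 6)) x) = Ffun (a * b) (B6 x) :=
      Ffun_spec (a * b) x
    have kb : B6 ((b : Equiv.Perm (Fin 6)) x) = Ffun b (B6 x) := Ffun_spec b x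
    have ka : B6 ((a : Equiv.Perm (Fin 6)) ((b : Equiv.Perm (Fin 6)) x)) =
        Ffun a (B6 ((b : Equiv.Perm (Fin 6)) x)) := Ffun_spec a _
    calc Ffun (a * b) c = Ffun (a * b) (B6 x) := by rw [hx]
      _ = B6 (((a * b : Hblk) : Equiv.Perm (Fin 6)) x) := key.symm
      _ = B6 ((a : Equiv.Perm (Fin 6)) ((b : Equiv.Perm (Fin 6)) x)) := rfl
      _ = Ffun a (Ffun b (B6 x)) := by rw [ka, kb]
      _ = (Ffun a * Ffun b) c := by rw [hx]; rfl)

lemma Hblk_solvable : Group.IsSolvable Hblk := by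
  haveI := Kblk_solvable
  haveI := isSolvable_perm_bool
  refine solvable_of_ker_le_range (Subgroup.inclusion Kblk_le_Hblk) Fhom ?_
  intro π hπ
  have hπ1 : Ffun π = 1 := hπ
  have hmem : (π : Equiv.Perm (Fin 6)) ∈ Kblk := by
    intro x
    rw [Ffun_spec π x, hπ1]
    rfl
  exact ⟨⟨(π : Equiv.Perm (Fin 6)), hmem⟩, rfl⟩

lemma swap_mem_Hblk {a b : Fin 6} (hab : B6 a = B6 b) : Equiv.swap a b ∈ Hblk := by
  have key : ∀ w, B6 (Equiv.swap a b w) = B6 w := by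
    intro w
    rw [Equiv.swap_apply_def]
    split_ifs with h1 h2
    · rw [h1, hab]
    · rw [h2, hab]
    · rfl
  intro u v
  rw [key u, key v]

theorem solvable_subgroup_not_stabilizing_orbits :
    ∃ H : Subgroup (Equiv.Perm (Fin 6)),
      IsSolvable H ∧
      (Equiv.swap (1 : Fin 6) 2 * (Equiv.swap (3 : Fin 6) 4 * Equiv.swap (4 : Fin 6) 5)) ∈ H ∧
      (∀ x y : Fin 6, ∃ h ∈ H, h x = y) ∧
      ∃ h ∈ H, ∃ x : Fin 6,
        ¬ (Equiv.swap (1 : Fin 6) 2 * (Equiv.swap (3 : Fin 6) 4 * Equiv.swap (4 : Fin 6) 5)).SameCycle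
            x (h x) := by
  set g : Equiv.Perm (Fin 6) :=
    Equiv.swap (1 : Fin 6) 2 * (Equiv.swap (3 : Fin 6) 4 * Equiv.swap (4 : Fin 6) 5) with hg
  -- the block swap x ↦ x + 3
  have hc : ∃ c : Equiv.Perm (Fin 6), c ∈ Hblk ∧ (∀ w, B6 (c w) = !B6 w) ∧ c 0 = 3 := by
    refine ⟨Equiv.addRight (3 : Fin 6), ?_, ?_, ?_⟩
    · show ∀ x y : Fin 6, B6 (x + 3) = B6 (y + 3) ↔ B6 x = B6 y
      decide
    · show ∀ w : Fin 6, B6 (w + 3) = !B6 w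
      decide
    · rfl
  obtain ⟨c, hcH, hcB, hc0⟩ := hc
  refine ⟨Hblk, Hblk_solvable, ?_, ?_, ?_⟩
  · show ∀ x y : Fin 6, B6 (g x) = B6 (g y) ↔ B6 x = B6 y
    rw [hg]; decide
  · intro x y
    by_cases hxy : B6 x = B6 y
    · exact ⟨Equiv.swap x y, swap_mem_Hblk hxy, Equiv.swap_apply_left x y⟩
    · have hcx : B6 (c x) = B6 y := by
        rw [hcB x]
        cases hx : B6 x <;> cases hy : B6 y <;> simp_all
      refine ⟨Equiv.swap (c x) y * c, mul_mem (swap_mem_Hblk hcx) hcH, ?_⟩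
      rw [Equiv.Perm.mul_apply, Equiv.swap_apply_left]
  · refine ⟨c, hcH, 0, ?_⟩
    rintro ⟨i, hi⟩
    have hg0 : g 0 = 0 := by rw [hg]; decide
    have hfix : (g ^ i) 0 = 0 := Equiv.Perm.zpow_apply_eq_self_of_apply_eq_self hg0 i
    rw [hfix, hc0] at hi
    exact absurd hi (by decide)
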